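/- Let g : ℝⁿ × ℝ → ℝⁿ and the pair (x̂, û) solve the characteristic system dx̂/dt = g(x̂, û), dû/dt = -L(û) on an interval, and suppose ψ(t, x̂(t;λ)) = λ for all t and λ, with ψ C¹. Then u(t,x) := û(t, ψ(t,x)) satisfies the Hamilton–Jacobi equation ∂_t u(t,x) + ⟨∂_x u(t,x), g(x, u(t,x))⟩ + L(u(t,x)) = 0. -/

import Mathlib

/-- Method of characteristics: if `(x̂, û)` solves the characteristic system
`dx̂/dt = g(x̂, û)`, `dû/dt = -L(û)` on `(a,b)` and `ψ(t, x̂(t;λ)) = λ` with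
`ψ` and `û` of class `C¹`, then `u(t,x) := û(t, ψ(t,x))` solves
`∂_t u + ⟨∂_x u, g(x, u)⟩ + L(u) = 0` along the characteristics. -/
theorem stmt_7 (n : ℕ) (a b : ℝ)
    (g : (Fin n → ℝ) → ℝ → (Fin n → ℝ)) (L : ℝ → ℝ)
    (xh : ℝ → (Fin n → ℝ) → (Fin n → ℝ)) (uh : ℝ → (Fin n → ℝ) → ℝ)
    (ψ : ℝ → (Fin n → ℝ) → (Fin n → ℝ))
    (hxh : ∀ lam : Fin n → ℝ, ∀ t ∈ Set.Ioo a b,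
      HasDerivAt (fun s => xh s lam) (g (xh t lam) (uh t lam)) t)
    (huh : ∀ lam : Fin n → ℝ, ∀ t ∈ Set.Ioo a b,
      HasDerivAt (fun s => uh s lam) (-(L (uh t lam))) t)
    (huC1 : ContDiff ℝ 1 (fun p : ℝ × (Fin n → ℝ) => uh p.1 p.2))
    (hψC1 : ContDiff ℝ 1 (fun p : ℝ × (Fin n → ℝ) => ψ p.1 p.2))
    (hinv : ∀ t ∈ Set.Ioo a b, ∀ lam : Fin n → ℝ, ψ t (xh t lam) = lam) :
    ∀ t ∈ Set.Ioo a b, ∀ lam : Fin n → ℝ,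
      deriv (fun s => uh s (ψ s (xh t lam))) t
        + fderiv ℝ (fun y => uh t (ψ t y)) (xh t lam)
            (g (xh t lam) (uh t (ψ t (xh t lam))))
        + L (uh t (ψ t (xh t lam))) = 0 := by
  intro t ht lam
  set x := xh t lam with hx
  set F : ℝ × (Fin n → ℝ) → ℝ := fun p => uh p.1 (ψ p.1 p.2) with hFdef
  have hFC1 : ContDiff ℝ 1 F := by
    have : F = (fun p : ℝ × (Fin n → ℝ) => uh p.1 p.2) ∘
        (fun p : ℝ × (Fin n → ℝ) => (p.1, ψ p.1 p.2)) := rfl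
    rw [this]
    exact huC1.comp (contDiff_fst.prodMk hψC1)
  have hF : HasFDerivAt F (fderiv ℝ F (t, x)) (t, x) :=
    (hFC1.differentiable one_ne_zero (t, x)).hasFDerivAt
  set D := fderiv ℝ F (t, x) with hD
  have hval : ψ t x = lam := hinv t ht lam
  -- value of g used everywhere
  have hg : g x (uh t (ψ t x)) = g x (uh t lam) := by rw [hval]
  -- time partial derivative
  have h1 : HasDerivAt (fun s => (s, x)) ((1 : ℝ), (0 : Fin n → ℝ)) t :=
    (hasDerivAt_id t).prodMk (hasDerivAt_const t x)
  have hderiv : deriv (fun s => uh s (ψ s x)) t = D (1, 0) :=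
    by have := (hF.comp_hasDerivAt t h1).deriv; exact this
  -- space partial derivative
  have h2 : HasFDerivAt (fun y : Fin n → ℝ => (t, y))
      (ContinuousLinearMap.inr ℝ ℝ (Fin n → ℝ)) x := hasFDerivAt_prodMk_right t x
  have hfderiv : fderiv ℝ (fun y => uh t (ψ t y)) x =
      D.comp (ContinuousLinearMap.inr ℝ ℝ (Fin n → ℝ)) :=
    (hF.comp x h2).fderiv
  -- derivative along the characteristic
  have hpath : HasDerivAt (fun s => (s, xh s lam)) ((1 : ℝ), g x (uh t lam)) t :=
    (hasDerivAt_id t).prodMk (hxh lam t ht)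
  have hcomp : HasDerivAt (fun s => uh s (ψ s (xh s lam))) (D (1, g x (uh t lam))) t := by
    have := hF.comp_hasDerivAt t hpath
    exact this
  have heq : (fun s => uh s (ψ s (xh s lam))) =ᶠ[nhds t] (fun s => uh s lam) := by
    filter_upwards [Ioo_mem_nhds ht.1 ht.2] with s hs
    rw [hinv s hs lam]
  have hcomp' : HasDerivAt (fun s => uh s lam) (D (1, g x (uh t lam))) t :=
    hcomp.congr_of_eventuallyEq heq.symm
  have huniq : D (1, g x (uh t lam)) = -(L (uh t lam)) :=
    hcomp'.unique (huh lam t ht)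
  have hsplit : D (1, g x (uh t lam)) = D (1, 0) + D (0, g x (uh t lam)) := by
    rw [← map_add]
    congr 1
    simp
  rw [hderiv, hfderiv, hval]
  simp only [ContinuousLinearMap.comp_apply, ContinuousLinearMap.inr_apply]
  have := hsplit.symm.trans huniq
  linarith [this]
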